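/- Let X and Y be irreducible 1-step shifts of finite type over finite alphabets, Z a shift space, and φ : X → Y, ψ : Y → Z 1-block factor codes, with π = ψ ∘ φ. Let y ∈ Y be a recurrent point. Then d_{φ/ψ}(y) = min{ d_{φ/ψ}(w) : w a block occurring in y }. -/

import Mathlib

/- Common definitions: shift spaces over finite alphabets, 1-block factor codes,
   transition classes, class degrees, relative transition classes, relative class
   degrees, routability and depth. -/

open Set

namespace SymbDyn

variable {A B C D : Type*}

/-- The shift map `σ` on bi-infinite sequences. -/
def shift (α : Type*) : (ℤ → α) → (ℤ → α) := fun x i => x (i + 1)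

/-- The map on points induced letterwise by a symbol map (a 1-block code). -/
def sliding (Φ : A → B) : (ℤ → A) → (ℤ → B) := fun x i => Φ (x i)

/-- The block `w` occurs in the point `x` starting at coordinate `n`. -/
def OccursAt (x : ℤ → A) (w : List A) (n : ℤ) : Prop :=
  ∀ i : ℕ, i < w.length → w[i]? = some (x (n + i))

/-- The block `w` occurs somewhere in the point `x`. -/
def OccursInPoint (x : ℤ → A) (w : List A) : Prop := ∃ n : ℤ, OccursAt x w n

/-- The block `w` occurs in (a point of) the subset `X`. -/
def BlockOccursIn (X : Set (ℤ → A)) (w : List A) : Prop := ∃ x ∈ X, OccursInPoint x w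

/-- `X` is a shift space: nonempty, closed (product of discrete topologies) and
shift-invariant. -/
def IsShiftSpace [TopologicalSpace A] (X : Set (ℤ → A)) : Prop :=
  X.Nonempty ∧ IsClosed X ∧ shift A '' X = X

/-- `X` is irreducible: any two blocks of `X` can be connected inside `X`. -/
def IsIrreducibleShift (X : Set (ℤ → A)) : Prop :=
  ∀ u v : List A, BlockOccursIn X u → BlockOccursIn X v →
    ∃ t : List A, BlockOccursIn X (u ++ t ++ v)

/-- `X` is a 1-step shift of finite type: any point all of whose 2-blocks occur
in `X` lies in `X`. -/
def IsOneStepSFT (X : Set (ℤ → A)) : Prop :=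
  ∀ z : ℤ → A, (∀ i : ℤ, BlockOccursIn X [z i, z (i + 1)]) → z ∈ X

/-- `x` is right transitive in `X`: every block of `X` occurs in `x|_[0,∞)`. -/
def RightTransitive (X : Set (ℤ → A)) (x : ℤ → A) : Prop :=
  ∀ w : List A, BlockOccursIn X w → ∃ n : ℤ, 0 ≤ n ∧ OccursAt x w n

/-- `x` is left transitive in `X`: every block of `X` occurs in `x|_(-∞,0]`. -/
def LeftTransitive (X : Set (ℤ → A)) (x : ℤ → A) : Prop :=
  ∀ w : List A, BlockOccursIn X w → ∃ n : ℤ, n + w.length ≤ 1 ∧ OccursAt x w n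

/-- `x` is bi-transitive in `X`. -/
def BiTransitive (X : Set (ℤ → A)) (x : ℤ → A) : Prop :=
  RightTransitive X x ∧ LeftTransitive X x

/-- `x` is recurrent: every block of `x` occurs infinitely often to the right. -/
def Recurrent (x : ℤ → A) : Prop :=
  ∀ w : List A, OccursInPoint x w → ∀ n : ℤ, ∃ m : ℤ, n ≤ m ∧ OccursAt x w m

/-- `xb` is a `(π,m)`-bridge from `x` to `x'` (all living in `X`). -/
def IsBridge (X : Set (ℤ → A)) (π : (ℤ → A) → ℤ → C) (m : ℤ) (x x' xb : ℤ → A) : Prop :=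
  xb ∈ X ∧ (∀ i : ℤ, i ≤ m → xb i = x i) ∧
    (∃ n : ℤ, m < n ∧ ∀ i : ℤ, n ≤ i → xb i = x' i) ∧ π xb = π x

/-- `x →_π x'`: `π x = π x'` and there is a `(π,m)`-bridge from `x` to `x'`
for every `m`. -/
def TransTo (X : Set (ℤ → A)) (π : (ℤ → A) → ℤ → C) (x x' : ℤ → A) : Prop :=
  π x = π x' ∧ ∀ m : ℤ, ∃ xb, IsBridge X π m x x' xb

/-- `x ∼_π x'`. -/
def TransEquiv (X : Set (ℤ → A)) (π : (ℤ → A) → ℤ → C) (x x' : ℤ → A) : Prop :=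
  TransTo X π x x' ∧ TransTo X π x' x

/-- The `π`-transition class `[x]_π` of `x` inside `X`. -/
def transClass (X : Set (ℤ → A)) (π : (ℤ → A) → ℤ → C) (x : ℤ → A) : Set (ℤ → A) :=
  {x' | x' ∈ X ∧ TransEquiv X π x x'}

/-- The number `d_π(z)` of `π`-transition classes over the point `z`. -/
noncomputable def ptDeg (X : Set (ℤ → A)) (π : (ℤ → A) → ℤ → C) (z : ℤ → C) : ℕ∞ :=
  {S : Set (ℤ → A) | ∃ x ∈ X, π x = z ∧ S = transClass X π x}.encard

/-- The class degree `d_π = min_{z ∈ Z} d_π(z)`. -/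
noncomputable def classDeg (X : Set (ℤ → A)) (Z : Set (ℤ → C)) (π : (ℤ → A) → ℤ → C) : ℕ∞ :=
  ⨅ z ∈ Z, ptDeg X π z

/-- `xb` is a `(φ/ψ,m)`-bridge from `x` to `x'` relative to `ψ` (whose transition
relation lives on `Y`). -/
def IsRelBridge (X : Set (ℤ → A)) (Y : Set (ℤ → B)) (φ : (ℤ → A) → ℤ → B)
    (ψ : (ℤ → B) → ℤ → C) (m : ℤ) (x x' xb : ℤ → A) : Prop :=
  xb ∈ X ∧ (∀ i : ℤ, i ≤ m → xb i = x i) ∧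
    (∃ n : ℤ, m < n ∧ ∀ i : ℤ, n ≤ i → xb i = x' i) ∧ TransEquiv Y ψ (φ xb) (φ x)

/-- `x →_{φ/ψ} x'`. -/
def RelTransTo (X : Set (ℤ → A)) (Y : Set (ℤ → B)) (φ : (ℤ → A) → ℤ → B)
    (ψ : (ℤ → B) → ℤ → C) (x x' : ℤ → A) : Prop :=
  TransEquiv Y ψ (φ x) (φ x') ∧ ∀ m : ℤ, ∃ xb, IsRelBridge X Y φ ψ m x x' xb

/-- `x ∼_{φ/ψ} x'`. -/
def RelTransEquiv (X : Set (ℤ → A)) (Y : Set (ℤ → B)) (φ : (ℤ → A) → ℤ → B)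
    (ψ : (ℤ → B) → ℤ → C) (x x' : ℤ → A) : Prop :=
  RelTransTo X Y φ ψ x x' ∧ RelTransTo X Y φ ψ x' x

/-- The `φ/ψ`-transition class `[x]_{φ/ψ}` of `x`. -/
def relClass (X : Set (ℤ → A)) (Y : Set (ℤ → B)) (φ : (ℤ → A) → ℤ → B)
    (ψ : (ℤ → B) → ℤ → C) (x : ℤ → A) : Set (ℤ → A) :=
  {x' | x' ∈ X ∧ RelTransEquiv X Y φ ψ x x'}

/-- The number `d_{φ/ψ}(y)` of `φ/ψ`-transition classes over `y`. -/
noncomputable def relPtDeg (X : Set (ℤ → A)) (Y : Set (ℤ → B)) (φ : (ℤ → A) → ℤ → B)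
    (ψ : (ℤ → B) → ℤ → C) (y : ℤ → B) : ℕ∞ :=
  {S : Set (ℤ → A) | ∃ x ∈ X, φ x = y ∧ S = relClass X Y φ ψ x}.encard

/-- The class degree `d_{φ/ψ} = min_{y ∈ Y} d_{φ/ψ}(y)` of `φ` relative to `ψ`. -/
noncomputable def relClassDeg (X : Set (ℤ → A)) (Y : Set (ℤ → B)) (φ : (ℤ → A) → ℤ → B)
    (ψ : (ℤ → B) → ℤ → C) : ℕ∞ :=
  ⨅ y ∈ Y, relPtDeg X Y φ ψ y

/-- The block `x|_{[s, s+l-1]}`. -/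
def segment (x : ℤ → A) (s : ℤ) (l : ℕ) : List A := (List.range l).map fun i => x (s + i)

/-- The block `u` (of the same length as `w`) is routable through the symbol `a`
at coordinate `n` (coordinates start at 1) with respect to the 1-block code
induced by `Θ`, over the target block `w`. -/
def RoutableThru (X : Set (ℤ → A)) (Θ : A → C) (w : List C) (n : ℕ) (a : A)
    (u : List A) : Prop :=
  ∃ v : List A, BlockOccursIn X v ∧ v.length = u.length ∧ v.map Θ = w ∧
    v[0]? = u[0]? ∧ v[v.length - 1]? = u[u.length - 1]? ∧
    v[n - 1]? = some a

/-- `u` is `φ/ψ`-routable through `a` at `n` over the block `w` of `Y`. -/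
def RelRoutable (X : Set (ℤ → A)) (Φ : A → B) (Ψ : B → C) (w : List B) (n : ℕ) (a : A)
    (u : List A) : Prop :=
  RoutableThru X (Ψ ∘ Φ) (w.map Ψ) n a u

/-- The block `w` of `Y` is `φ/ψ`-presented through `M` at `n`. -/
def RelPresented (X : Set (ℤ → A)) (Φ : A → B) (Ψ : B → C) (w : List B) (n : ℕ)
    (M : Set A) : Prop :=
  ∀ u : List A, BlockOccursIn X u → u.map Φ = w → ∃ a ∈ M, RelRoutable X Φ Ψ w n a u

/-- The `φ/ψ`-depth `d_{φ/ψ}(w)` of a block `w`. -/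
noncomputable def relDepth (X : Set (ℤ → A)) (Φ : A → B) (Ψ : B → C) (w : List B) : ℕ∞ :=
  sInf {k : ℕ∞ | ∃ n : ℕ, 1 ≤ n ∧ n ≤ w.length ∧
    ∃ M : Finset A, RelPresented X Φ Ψ w n ↑M ∧ k = (M.card : ℕ∞)}

end SymbDyn

namespace SymbDyn

/- ================= Auxiliary infrastructure ================= -/

section Aux

variable {A B C : Type*}

/-- Splice of two points at coordinate `θ`. -/
def spl (θ : ℤ) (x x' : ℤ → A) : ℤ → A := fun i => if i < θ then x i else x' i

lemma spl_lt {θ i : ℤ} (h : i < θ) (x x' : ℤ → A) : spl θ x x' i = x i := if_pos h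

lemma spl_ge {θ i : ℤ} (h : θ ≤ i) (x x' : ℤ → A) : spl θ x x' i = x' i :=
  if_neg (not_lt.2 h)

lemma sliding_spl (Φ : A → B) (θ : ℤ) (x x' : ℤ → A) :
    sliding Φ (spl θ x x') = spl θ (sliding Φ x) (sliding Φ x') := by
  funext i
  by_cases h : i < θ
  · simp [sliding, spl, h]
  · simp [sliding, spl, h]

lemma sliding_sliding (Φ : A → B) (Ψ : B → C) (x : ℤ → A) :
    sliding Ψ (sliding Φ x) = sliding (Ψ ∘ Φ) x := rfl

/- segment lemmas -/

lemma flatMap_singleton_eq_map {α β : Type*} (f : α → β) (L : List α) :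
    (L.flatMap fun a => [f a]) = L.map f := by
  induction L with
  | nil => rfl
  | cons h t ih => rw [List.flatMap_cons, ih]; rfl

lemma segment_eq (x : ℤ → A) (s : ℤ) (l : ℕ) :
    segment x s l = (List.range l).map (fun i : ℕ => x (s + (i : ℤ))) := by
  show List.map _ ((List.range l).flatMap fun (a : ℕ) => [(a : ℤ)]) = _
  rw [flatMap_singleton_eq_map (fun a : ℕ => (a : ℤ)) (List.range l), List.map_map]
  rfl

lemma segment_length (x : ℤ → A) (s : ℤ) (l : ℕ) : (segment x s l).length = l := by
  rw [segment_eq, List.length_map, List.length_range]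

lemma segment_get? (x : ℤ → A) (s : ℤ) {l i : ℕ} (h : i < l) :
    (segment x s l)[i]? = some (x (s + i)) := by
  rw [segment_eq, List.getElem?_map, List.getElem?_range h]
  rfl

lemma occursAt_segment (x : ℤ → A) (s : ℤ) (l : ℕ) : OccursAt x (segment x s l) s := by
  intro i hi
  rw [segment_length] at hi
  exact segment_get? x s hi

lemma OccursAt.value {x : ℤ → A} {w : List A} {n : ℤ} (h : OccursAt x w n)
    {i : ℕ} (hi : i < w.length) : w[i]? = some (x (n + i)) := h i hi

lemma eq_segment_of_occursAt {x : ℤ → A} {w : List A} {n : ℤ} (h : OccursAt x w n) :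
    w = segment x n w.length := by
  apply List.ext_getElem?
  intro i
  by_cases hi : i < w.length
  · rw [h i hi, segment_get? x n hi]
  · rw [List.getElem?_eq_none_iff.2 (le_of_not_gt hi), List.getElem?_eq_none_iff.2]
    rw [segment_length]
    exact le_of_not_gt hi

lemma segment_map (Φ : A → B) (x : ℤ → A) (s : ℤ) (l : ℕ) :
    (segment x s l).map Φ = segment (sliding Φ x) s l := by
  rw [segment_eq, segment_eq, List.map_map]
  rfl

/- shift and membership lemmas -/

/-- Shift by an arbitrary integer. -/
def shiftBy (k : ℤ) (x : ℤ → A) : ℤ → A := fun i => x (i + k)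

lemma mem_shiftBy [TopologicalSpace A] {X : Set (ℤ → A)} (hX : IsShiftSpace X)
    (k : ℤ) {x : ℤ → A} (hx : x ∈ X) : shiftBy k x ∈ X := by
  induction k using Int.induction_on with
  | zero =>
      have : shiftBy 0 x = x := by funext i; show x (i + 0) = x i; rw [add_zero]
      rwa [this]
  | succ n ih =>
      have heq : shiftBy (n + 1) x = shift A (shiftBy n x) := by
        funext i; show x (i + ((n : ℤ) + 1)) = x (i + 1 + n); congr 1; omega
      rw [heq, ← hX.2.2]
      exact ⟨_, ih, rfl⟩
  | pred n ih =>
      have h2 : shiftBy (-n) x ∈ shift A '' X := by rw [hX.2.2]; exact ih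
      obtain ⟨z, hz, hzz⟩ := h2
      have hzeq : z = shiftBy (-(n : ℤ) - 1) x := by
        funext i
        have h3 := congrFun hzz (i - 1)
        show z i = x (i + (-(n : ℤ) - 1))
        have h4 : z i = z (i - 1 + 1) := by norm_num
        rw [h4]
        rw [show shift A z (i - 1) = z (i - 1 + 1) from rfl] at h3
        rw [h3]
        show x (i - 1 + -(n : ℤ)) = _
        congr 1; omega
      rw [← hzeq]; exact hz

lemma blockOccursIn_segment [TopologicalSpace A] {X : Set (ℤ → A)} {x : ℤ → A}
    (hx : x ∈ X) (s : ℤ) (l : ℕ) : BlockOccursIn X (segment x s l) :=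
  ⟨x, hx, s, occursAt_segment x s l⟩

lemma blockOccursIn_elim [TopologicalSpace A] {X : Set (ℤ → A)} (hX : IsShiftSpace X)
    {v : List A} (h : BlockOccursIn X v) (c : ℤ) : ∃ V ∈ X, OccursAt V v c := by
  obtain ⟨x, hx, n, hn⟩ := h
  refine ⟨shiftBy (n - c) x, mem_shiftBy hX _ hx, ?_⟩
  intro i hi
  rw [hn i hi]
  congr 1
  show x (n + ↑i) = x (c + ↑i + (n - c))
  congr 1
  omega

lemma pair_of_eq [TopologicalSpace A] {X : Set (ℤ → A)} {x z : ℤ → A}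
    (hx : x ∈ X) {i j : ℤ} (h1 : z i = x j) (h2 : z (i + 1) = x (j + 1)) :
    BlockOccursIn X [z i, z (i + 1)] := by
  refine ⟨x, hx, j, ?_⟩
  intro k hk
  simp at hk
  interval_cases k
  · simpa using h1
  · simpa using h2

lemma glue [TopologicalSpace A] {X : Set (ℤ → A)} (hsft : IsOneStepSFT X)
    {x x' : ℤ → A} (hx : x ∈ X) (hx' : x' ∈ X) {θ : ℤ} (h : x θ = x' θ) :
    spl θ x x' ∈ X := by
  apply hsft
  intro i
  rcases lt_trichotomy (i + 1) θ with h1 | h1 | h1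
  · exact pair_of_eq hx (spl_lt (by omega) x x') (spl_lt h1 x x')
  · refine pair_of_eq hx (spl_lt (by omega) x x') ?_
    rw [spl_ge (by omega) x x', h1, ← h]
  · by_cases h2 : i < θ
    · have hi : i = θ := by omega
      refine pair_of_eq hx' ?_ (spl_ge (by omega) x x')
      rw [spl_lt h2 x x', hi, h]
    · exact pair_of_eq hx' (spl_ge (by omega) x x') (spl_ge (by omega) x x')

/-- Variant of `glue` where the two points agree at `θ - 1` instead of `θ`. -/
lemma glue' [TopologicalSpace A] {X : Set (ℤ → A)} (hsft : IsOneStepSFT X)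
    {x x' : ℤ → A} (hx : x ∈ X) (hx' : x' ∈ X) {θ : ℤ} (h : x (θ - 1) = x' (θ - 1)) :
    spl θ x x' ∈ X := by
  apply hsft
  intro i
  rcases lt_trichotomy (i + 1) θ with h1 | h1 | h1
  · exact pair_of_eq hx (spl_lt (by omega) x x') (spl_lt h1 x x')
  · have hi : i = θ - 1 := by omega
    refine pair_of_eq hx' ?_ (spl_ge (by omega) x x')
    rw [spl_lt (by omega) x x', hi, h]
  · exact pair_of_eq hx' (spl_ge (by omega) x x') (spl_ge (by omega) x x')

end Aux
/- ================= Transition relation lemmas ================= -/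

section Trans

variable {B C : Type*} [TopologicalSpace B] {Y : Set (ℤ → B)} {Ψ : B → C}

lemma TransTo.psi_eq {u v : ℤ → B} (h : TransTo Y (sliding Ψ) u v) :
    sliding Ψ u = sliding Ψ v := h.1

lemma transTo_refl {u : ℤ → B} (hu : u ∈ Y) : TransTo Y (sliding Ψ) u u :=
  ⟨rfl, fun m => ⟨u, hu, fun _ _ => rfl, ⟨m + 1, by omega, fun _ _ => rfl⟩, rfl⟩⟩

lemma transEquiv_refl {u : ℤ → B} (hu : u ∈ Y) : TransEquiv Y (sliding Ψ) u u :=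
  ⟨transTo_refl hu, transTo_refl hu⟩

/-- If `u` and `v` have the same `ψ`-image and agree on a right ray, they are
`ψ`-transition equivalent. -/
lemma transEquiv_of_right_eq {u v : ℤ → B} (hu : u ∈ Y) (hv : v ∈ Y)
    (hψ : sliding Ψ u = sliding Ψ v) (β : ℤ) (h : ∀ i, β ≤ i → u i = v i) :
    TransEquiv Y (sliding Ψ) u v := by
  constructor
  · refine ⟨hψ, fun m => ⟨u, hu, fun _ _ => rfl, ⟨max (m + 1) β, by omega, ?_⟩, rfl⟩⟩
    intro i hi
    exact h i (le_trans (le_max_right _ _) hi)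
  · refine ⟨hψ.symm, fun m => ⟨v, hv, fun _ _ => rfl, ⟨max (m + 1) β, by omega, ?_⟩, rfl⟩⟩
    intro i hi
    exact (h i (le_trans (le_max_right _ _) hi)).symm

lemma transTo_trans (hYsft : IsOneStepSFT Y) {u v z : ℤ → B}
    (h1 : TransTo Y (sliding Ψ) u v) (h2 : TransTo Y (sliding Ψ) v z) :
    TransTo Y (sliding Ψ) u z := by
  refine ⟨h1.1.trans h2.1, fun m => ?_⟩
  obtain ⟨b1, hb1Y, hb1l, ⟨n1, hn1, hb1r⟩, hb1ψ⟩ := h1.2 m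
  obtain ⟨b2, hb2Y, hb2l, ⟨n2, hn2, hb2r⟩, hb2ψ⟩ := h2.2 n1
  have hj : b1 n1 = b2 n1 := by rw [hb1r n1 le_rfl, hb2l n1 le_rfl]
  refine ⟨spl n1 b1 b2, glue hYsft hb1Y hb2Y hj, ?_, ⟨n2, by omega, ?_⟩, ?_⟩
  · intro i hi
    rw [spl_lt (by omega) b1 b2]
    exact hb1l i hi
  · intro i hi
    rw [spl_ge (by omega) b1 b2]
    exact hb2r i hi
  · rw [sliding_spl]
    funext i
    by_cases hc : i < n1
    · rw [spl_lt hc]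
      exact congrFun hb1ψ i
    · rw [spl_ge (not_lt.1 hc)]
      rw [congrFun hb2ψ i]
      exact (congrFun h1.1 i).symm

lemma TransEquiv.symm' {u v : ℤ → B} (h : TransEquiv Y (sliding Ψ) u v) :
    TransEquiv Y (sliding Ψ) v u := ⟨h.2, h.1⟩

lemma transEquiv_trans (hYsft : IsOneStepSFT Y) {u v z : ℤ → B}
    (h1 : TransEquiv Y (sliding Ψ) u v) (h2 : TransEquiv Y (sliding Ψ) v z) :
    TransEquiv Y (sliding Ψ) u z :=
  ⟨transTo_trans hYsft h1.1 h2.1, transTo_trans hYsft h2.2 h1.2⟩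

/-- A splice of two points that are both `ψ`-equivalent to `u` is `ψ`-equivalent
to `u`. -/
lemma transEquiv_spl (hYsft : IsOneStepSFT Y) {v₁ v₂ u : ℤ → B} {θ : ℤ}
    (hv₁ : v₁ ∈ Y) (hv₂ : v₂ ∈ Y)
    (h1 : TransEquiv Y (sliding Ψ) v₁ u) (h2 : TransEquiv Y (sliding Ψ) v₂ u)
    (hθ : v₁ θ = v₂ θ) : TransEquiv Y (sliding Ψ) (spl θ v₁ v₂) u := by
  have hzY : spl θ v₁ v₂ ∈ Y := glue hYsft hv₁ hv₂ hθ
  have hψz : sliding Ψ (spl θ v₁ v₂) = sliding Ψ u := by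
    rw [sliding_spl]
    funext i
    by_cases hc : i < θ
    · rw [spl_lt hc]; exact congrFun h1.1.1 i
    · rw [spl_ge (not_lt.1 hc)]; exact congrFun h2.1.1 i
  constructor
  · refine ⟨hψz, fun m => ?_⟩
    obtain ⟨b, hbY, hbl, ⟨n, hn, hbr⟩, hbψ⟩ := h2.1.2 (max m θ)
    have hj : spl θ v₁ v₂ (max m θ) = b (max m θ) := by
      rw [spl_ge (le_max_right m θ), hbl _ le_rfl]
    refine ⟨spl (max m θ) (spl θ v₁ v₂) b, glue hYsft hzY hbY hj, ?_,
      ⟨n, by omega, ?_⟩, ?_⟩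
    · intro i hi
      by_cases hc : i < max m θ
      · rw [spl_lt hc]
      · have : i = max m θ := by omega
        rw [spl_ge (not_lt.1 hc), this, ← hj]
    · intro i hi
      rw [spl_ge (by omega)]
      exact hbr i hi
    · rw [sliding_spl]
      funext i
      by_cases hc : i < max m θ
      · rw [spl_lt hc]
      · rw [spl_ge (not_lt.1 hc), congrFun hbψ i, congrFun h2.1.1 i,
          ← congrFun hψz i]
  · refine ⟨hψz.symm, fun m => ?_⟩
    obtain ⟨b, hbY, hbl, ⟨n, hn, hbr⟩, hbψ⟩ := h2.2.2 (max m θ)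
    refine ⟨b, hbY, fun i hi => hbl i (by omega), ⟨n, by omega, ?_⟩, hbψ⟩
    intro i hi
    rw [spl_ge (by omega)]
    exact hbr i hi

end Trans

/- ================= Relative transition lemmas ================= -/

section RelTrans

variable {A B C : Type*} [TopologicalSpace A] [TopologicalSpace B]
variable {X : Set (ℤ → A)} {Y : Set (ℤ → B)} {Φ : A → B} {Ψ : B → C}

lemma phi_mem (hφ : sliding Φ '' X = Y) {x : ℤ → A} (hx : x ∈ X) :
    sliding Φ x ∈ Y := hφ ▸ ⟨x, hx, rfl⟩

lemma relTransTo_refl (hφ : sliding Φ '' X = Y) {x : ℤ → A} (hx : x ∈ X) :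
    RelTransTo X Y (sliding Φ) (sliding Ψ) x x :=
  ⟨transEquiv_refl (phi_mem hφ hx), fun m =>
    ⟨x, hx, fun _ _ => rfl, ⟨m + 1, by omega, fun _ _ => rfl⟩,
      transEquiv_refl (phi_mem hφ hx)⟩⟩

lemma relTransEquiv_refl (hφ : sliding Φ '' X = Y) {x : ℤ → A} (hx : x ∈ X) :
    RelTransEquiv X Y (sliding Φ) (sliding Ψ) x x :=
  ⟨relTransTo_refl hφ hx, relTransTo_refl hφ hx⟩

lemma relTransTo_trans (hXsft : IsOneStepSFT X) (hYsft : IsOneStepSFT Y)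
    (hφ : sliding Φ '' X = Y) {x x' x'' : ℤ → A}
    (h1 : RelTransTo X Y (sliding Φ) (sliding Ψ) x x')
    (h2 : RelTransTo X Y (sliding Φ) (sliding Ψ) x' x'') :
    RelTransTo X Y (sliding Φ) (sliding Ψ) x x'' := by
  refine ⟨transEquiv_trans hYsft h1.1 h2.1, fun m => ?_⟩
  obtain ⟨b1, hb1X, hb1l, ⟨n1, hn1, hb1r⟩, hb1e⟩ := h1.2 m
  obtain ⟨b2, hb2X, hb2l, ⟨n2, hn2, hb2r⟩, hb2e⟩ := h2.2 n1
  have hj : b1 n1 = b2 n1 := by rw [hb1r n1 le_rfl, hb2l n1 le_rfl]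
  refine ⟨spl n1 b1 b2, glue hXsft hb1X hb2X hj, ?_, ⟨n2, by omega, ?_⟩, ?_⟩
  · intro i hi
    rw [spl_lt (by omega) b1 b2]
    exact hb1l i hi
  · intro i hi
    rw [spl_ge (by omega) b1 b2]
    exact hb2r i hi
  · rw [sliding_spl]
    have hj' : sliding Φ b1 n1 = sliding Φ b2 n1 := by
      show Φ (b1 n1) = Φ (b2 n1); rw [hj]
    exact transEquiv_spl hYsft (phi_mem hφ hb1X) (phi_mem hφ hb2X) hb1e
      (transEquiv_trans hYsft hb2e h1.1.symm') hj'

lemma RelTransEquiv.symm' {x x' : ℤ → A}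
    (h : RelTransEquiv X Y (sliding Φ) (sliding Ψ) x x') :
    RelTransEquiv X Y (sliding Φ) (sliding Ψ) x' x := ⟨h.2, h.1⟩

lemma relTransEquiv_trans (hXsft : IsOneStepSFT X) (hYsft : IsOneStepSFT Y)
    (hφ : sliding Φ '' X = Y) {x x' x'' : ℤ → A}
    (h1 : RelTransEquiv X Y (sliding Φ) (sliding Ψ) x x')
    (h2 : RelTransEquiv X Y (sliding Φ) (sliding Ψ) x' x'') :
    RelTransEquiv X Y (sliding Φ) (sliding Ψ) x x'' :=
  ⟨relTransTo_trans hXsft hYsft hφ h1.1 h2.1,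
   relTransTo_trans hXsft hYsft hφ h2.2 h1.2⟩

lemma relClass_eq_of_equiv (hXsft : IsOneStepSFT X) (hYsft : IsOneStepSFT Y)
    (hφ : sliding Φ '' X = Y) {x x' : ℤ → A}
    (h : RelTransEquiv X Y (sliding Φ) (sliding Ψ) x x') :
    relClass X Y (sliding Φ) (sliding Ψ) x = relClass X Y (sliding Φ) (sliding Ψ) x' := by
  ext z
  constructor
  · rintro ⟨hz, he⟩
    exact ⟨hz, relTransEquiv_trans hXsft hYsft hφ h.symm' he⟩
  · rintro ⟨hz, he⟩
    exact ⟨hz, relTransEquiv_trans hXsft hYsft hφ h he⟩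

lemma mem_relClass_self (hφ : sliding Φ '' X = Y) {x : ℤ → A} (hx : x ∈ X) :
    x ∈ relClass X Y (sliding Φ) (sliding Ψ) x := ⟨hx, relTransEquiv_refl hφ hx⟩

end RelTrans
/- ================= Compactness / cluster utilities ================= -/

section Cluster

open Filter

variable {A : Type*} [Fintype A] [TopologicalSpace A] [DiscreteTopology A]

lemma exists_cluster (u : ℕ → (ℤ → A)) : ∃ z, MapClusterPt z atTop u := by
  have : CompactSpace (ℤ → A) := inferInstance
  obtain ⟨z, hz⟩ := exists_clusterPt_of_compactSpace (Filter.map u atTop)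
  exact ⟨z, hz⟩

lemma cluster_agree {u : ℕ → (ℤ → A)} {z : ℤ → A} (hz : MapClusterPt z atTop u)
    (F : Finset ℤ) (N : ℕ) : ∃ n, N ≤ n ∧ ∀ j ∈ F, u n j = z j := by
  have hU : {w : ℤ → A | ∀ j ∈ F, w j = z j} ∈ nhds z := by
    have heq : {w : ℤ → A | ∀ j ∈ F, w j = z j} = ⋂ j ∈ F, {w : ℤ → A | w j = z j} := by
      ext w; simp
    rw [heq]
    refine (isOpen_biInter_finset fun j _ => ?_).mem_nhds (by simp)
    have hpre : IsOpen ((fun w : ℤ → A => w j) ⁻¹' {z j}) :=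
      (isOpen_discrete ({z j} : Set A)).preimage (continuous_apply j)
    exact hpre
  have hfreq := (mapClusterPt_iff_frequently.mp hz) _ hU
  rw [Filter.frequently_atTop] at hfreq
  obtain ⟨n, hn, h⟩ := hfreq N
  exact ⟨n, hn, h⟩

lemma cluster_mem_closed {u : ℕ → (ℤ → A)} {z : ℤ → A} (hz : MapClusterPt z atTop u)
    {S : Set (ℤ → A)} (hS : IsClosed S) (N : ℕ) (h : ∀ n, N ≤ n → u n ∈ S) :
    z ∈ S := by
  rw [← hS.closure_eq, mem_closure_iff_nhds]
  intro t ht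
  have hfreq := (mapClusterPt_iff_frequently.mp hz) t ht
  rw [Filter.frequently_atTop] at hfreq
  obtain ⟨n, hn, hmem⟩ := hfreq N
  exact ⟨u n, hmem, h n hn⟩

end Cluster

/- ================= Pigeonhole utilities ================= -/

section Pigeon

/-- If a set of integers is unbounded above and mapped into a finite type, some
value is attained on an unbounded set. -/
lemma cofinal_pigeon {τ : Type*} [Finite τ] {S : Set ℤ}
    (hS : ∀ n : ℤ, ∃ m, n ≤ m ∧ m ∈ S) (f : ℤ → τ) :
    ∃ v : τ, ∀ n : ℤ, ∃ m, n ≤ m ∧ m ∈ S ∧ f m = v := by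
  by_contra hcon
  push_neg at hcon
  choose nv hnv using hcon
  obtain ⟨m₀, _, hm₀⟩ := hS 0
  haveI : Nonempty τ := ⟨f m₀⟩
  cases nonempty_fintype τ
  set nmax : ℤ := Finset.univ.sup' Finset.univ_nonempty nv with hnmax
  obtain ⟨m, hm, hmS⟩ := hS nmax
  have h1 : nv (f m) ≤ m :=
    le_trans (Finset.le_sup' nv (Finset.mem_univ (f m))) hm
  exact hnv (f m) m h1 hmS rfl

end Pigeon
/- ================= Route extraction ================= -/

section Route

set_option linter.unusedSectionVars false

variable {A B C : Type*} [TopologicalSpace A] [TopologicalSpace B]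
variable {X : Set (ℤ → A)} {Y : Set (ℤ → B)} {Φ : A → B} {Ψ : B → C}

lemma relRoutable_point (hX : IsShiftSpace X)
    {w : List B} {n : ℕ} {a : A} {u : List A}
    (h1 : 1 ≤ n) (h2 : n ≤ w.length)
    (hr : RelRoutable X Φ Ψ w n a u) (p : ℤ) :
    ∃ V, V ∈ X ∧ u.length = w.length ∧
      (∀ i : ℕ, i < w.length → (w[i]?).map Ψ = some (Ψ (Φ (V (p + i))))) ∧
      u[0]? = some (V p) ∧
      u[u.length - 1]? = some (V (p + ((w.length - 1 : ℕ) : ℤ))) ∧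
      V (p + ((n - 1 : ℕ) : ℤ)) = a := by
  obtain ⟨v, hvocc, hvlen, hvmap, hv0, hvl, hvn⟩ := hr
  have hlenw : v.length = w.length := by
    have := congrArg List.length hvmap
    rwa [List.length_map, List.length_map] at this
  have hulen : u.length = w.length := by rw [← hvlen, hlenw]
  have hvpos : 0 < v.length := by omega
  obtain ⟨V, hVX, hVocc⟩ := blockOccursIn_elim hX hvocc p
  have vget : ∀ i : ℕ, i < v.length → v[i]? = some (V (p + i)) := hVocc
  refine ⟨V, hVX, hulen, ?_, ?_, ?_, ?_⟩
  · intro i hi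
    rw [← List.getElem?_map (f := Ψ) (l := w) (i := i), ← hvmap, List.getElem?_map, vget i (by omega)]
    rfl
  · rw [← hv0, vget 0 hvpos]
    norm_num
  · have h := vget (v.length - 1) (by omega)
    rw [hvl] at h
    rw [show v.length - 1 = w.length - 1 from by omega] at h
    exact h
  · have h := vget (n - 1) (by omega)
    rw [hvn] at h
    exact (Option.some_injective _ h).symm

lemma psi_phi_eq_of_route {y : ℤ → B} {w : List B} {V : ℤ → A} {p : ℤ}
    (hVψ : ∀ i : ℕ, i < w.length → (w[i]?).map Ψ = some (Ψ (Φ (V (p + i)))))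
    (hwy : ∀ i : ℕ, i < w.length → w[i]? = some (y (p + i)))
    {q : ℤ} (hq1 : p ≤ q) (hq2 : q < p + (w.length : ℤ)) : Ψ (Φ (V q)) = Ψ (y q) := by
  obtain ⟨i, hiq, hil⟩ : ∃ i : ℕ, (i : ℤ) = q - p ∧ i < w.length :=
    ⟨(q - p).toNat, by omega, by omega⟩
  have h1 := hVψ i hil
  rw [hwy i hil] at h1
  have hpq : p + (i : ℤ) = q := by omega
  rw [hpq] at h1
  exact (Option.some_injective _ h1).symm

/-- The key bridge construction: if two points over `y` are routable through the
same symbol at the same occurrence of `w`, there is a relative bridge between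
them cutting at any `m` before the occurrence. -/
lemma bridge_of_common_route (hX : IsShiftSpace X) (hXsft : IsOneStepSFT X)
    (hφ : sliding Φ '' X = Y)
    {y : ℤ → B} {x x' : ℤ → A} (hx : x ∈ X) (hx' : x' ∈ X)
    (hfx : sliding Φ x = y) (hfx' : sliding Φ x' = y)
    {w : List B} {n : ℕ} {a : A} (h1 : 1 ≤ n) (h2 : n ≤ w.length) {p : ℤ}
    (hr : RelRoutable X Φ Ψ w n a (segment x p w.length))
    (hr' : RelRoutable X Φ Ψ w n a (segment x' p w.length))
    (hwy : ∀ i : ℕ, i < w.length → w[i]? = some (y (p + i)))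
    (m : ℤ) (hm : m < p) :
    ∃ xb, IsRelBridge X Y (sliding Φ) (sliding Ψ) m x x' xb := by
  have hfxq : ∀ q, Φ (x q) = y q := fun q => congrFun hfx q
  have hfx'q : ∀ q, Φ (x' q) = y q := fun q => congrFun hfx' q
  obtain ⟨V, hVX, _, hVψ, hV0, hVl, hVn⟩ := relRoutable_point hX h1 h2 hr p
  obtain ⟨V', hV'X, _, hV'ψ, hV'0, hV'l, hV'n⟩ := relRoutable_point hX h1 h2 hr' p
  set l := w.length with hl
  set n1 : ℤ := ((n - 1 : ℕ) : ℤ) with hn1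
  set l1 : ℤ := ((l - 1 : ℕ) : ℤ) with hl1
  have hb0 : 0 ≤ n1 := by rw [hn1]; positivity
  have hbnl : n1 ≤ l1 := by
    rw [hn1, hl1]
    have : n - 1 ≤ l - 1 := by omega
    exact_mod_cast this
  have hbl : l1 < (l : ℤ) := by rw [hl1]; omega
  -- extract endpoint equalities
  have hxV : x p = V p := by
    rw [segment_get? x p (by omega : 0 < l)] at hV0
    have := Option.some_injective _ hV0
    simpa using this
  have hx'V' : x' p = V' p := by
    rw [segment_get? x' p (by omega : 0 < l)] at hV'0
    have := Option.some_injective _ hV'0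
    simpa using this
  have hxVl : x (p + l1) = V (p + l1) := by
    rw [segment_length] at hVl
    rw [segment_get? x p (by omega : l - 1 < l)] at hVl
    exact Option.some_injective _ hVl
  have hx'V'l : x' (p + l1) = V' (p + l1) := by
    rw [segment_length] at hV'l
    rw [segment_get? x' p (by omega : l - 1 < l)] at hV'l
    exact Option.some_injective _ hV'l
  -- the bridge point
  set inner1 : ℤ → A := spl (p + l1) V' x' with hinner1
  set inner2 : ℤ → A := spl (p + n1) V inner1 with hinner2
  set xb : ℤ → A := spl p x inner2 with hxb
  have hinner1X : inner1 ∈ X := glue hXsft hV'X hx' hx'V'l.symm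
  have hjn : V (p + n1) = inner1 (p + n1) := by
    rcases eq_or_lt_of_le hbnl with hEq | hLt
    · have e1 : inner1 (p + n1) = x' (p + n1) := by rw [hinner1, spl_ge (by omega)]
      have e2 : x' (p + n1) = V' (p + n1) := by rw [hEq]; exact hx'V'l
      rw [e1, e2, hVn, hV'n]
    · have e1 : inner1 (p + n1) = V' (p + n1) := by rw [hinner1, spl_lt (by omega)]
      rw [e1, hVn, hV'n]
  have hinner2X : inner2 ∈ X := glue hXsft hVX hinner1X hjn
  have hjp : x p = inner2 p := by
    rcases lt_or_eq_of_le hb0 with hLt | hEq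
    · rw [hinner2, spl_lt (by omega)]; exact hxV
    · have hVp : V p = a := by
        have h := hVn; rw [← hEq, add_zero] at h; exact h
      rw [hinner2, spl_ge (by omega)]
      rcases lt_or_eq_of_le hbnl with hLt' | hEq'
      · have e1 : inner1 p = V' p := by rw [hinner1, spl_lt (by omega)]
        have hV'p : V' p = a := by
          have h := hV'n; rw [← hEq, add_zero] at h; exact h
        rw [e1, hxV, hVp, hV'p]
      · have hl10 : l1 = 0 := by omega
        have e1 : inner1 p = x' p := by rw [hinner1, spl_ge (by omega)]
        have hx'p : x' p = a := by
          have h := hx'V'l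
          rw [hl10, add_zero] at h
          have h2 := hV'n
          rw [← hEq, add_zero] at h2
          rw [h, h2]
        rw [e1, hxV, hVp, hx'p]
  have hxbX : xb ∈ X := glue hXsft hx hinner2X hjp
  -- values of xb on the four regions
  have hxb_lt : ∀ i : ℤ, i < p → xb i = x i := fun i hi => spl_lt hi _ _
  have hxb_right : ∀ i : ℤ, p + l1 ≤ i → xb i = x' i := by
    intro i hi
    rw [hxb, spl_ge (by omega), hinner2, spl_ge (by omega), hinner1, spl_ge (by omega)]
  have hxb_mid1 : ∀ i : ℤ, p ≤ i → i < p + n1 → xb i = V i := by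
    intro i hi1 hi2
    rw [hxb, spl_ge (by omega), hinner2, spl_lt (by omega)]
  have hxb_mid2 : ∀ i : ℤ, p + n1 ≤ i → i < p + l1 → xb i = V' i := by
    intro i hi1 hi2
    rw [hxb, spl_ge (by omega), hinner2, spl_ge (by omega), hinner1, spl_lt (by omega)]
  -- ψ∘φ image of xb agrees with ψ y
  have hψq : ∀ q, Ψ (Φ (xb q)) = Ψ (Φ (x q)) := by
    intro q
    rw [hfxq q]
    rcases lt_or_ge q p with hq | hq
    · rw [hxb_lt q hq, hfxq q]
    · rcases lt_or_ge q (p + n1) with hq2 | hq2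
      · rw [hxb_mid1 q hq hq2]
        exact psi_phi_eq_of_route hVψ hwy hq (by omega)
      · rcases lt_or_ge q (p + l1) with hq3 | hq3
        · rw [hxb_mid2 q hq2 hq3]
          exact psi_phi_eq_of_route hV'ψ hwy (by omega) (by omega)
        · rw [hxb_right q hq3, hfx'q q]
  have hψxb : sliding Ψ (sliding Φ xb) = sliding Ψ (sliding Φ x) := by
    funext q; exact hψq q
  refine ⟨xb, hxbX, fun i hi => hxb_lt i (by omega), ⟨max (p + l1) (m + 1), by omega, ?_⟩, ?_⟩
  · intro i hi
    exact hxb_right i (le_trans (le_max_left _ _) hi)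
  · refine transEquiv_of_right_eq (phi_mem hφ hxbX) (phi_mem hφ hx) hψxb (p + l1) ?_
    intro i hi
    show Φ (xb i) = Φ (x i)
    rw [hxb_right i hi, hfx'q i, hfxq i]
end Route
/- ================= Direction (i): degree ≤ presenting set ================= -/

section DirOne

set_option linter.unusedSectionVars false

variable {A B C : Type*} [Fintype A] [TopologicalSpace A] [DiscreteTopology A]
  [TopologicalSpace B]
variable {X : Set (ℤ → A)} {Y : Set (ℤ → B)} {Φ : A → B} {Ψ : B → C}

lemma relPtDeg_le_of_presented (hX : IsShiftSpace X) (hXsft : IsOneStepSFT X)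
    (hYsft : IsOneStepSFT Y) (hφ : sliding Φ '' X = Y)
    {y : ℤ → B} (hy : y ∈ Y) (hrec : Recurrent y)
    {w : List B} {n : ℕ} {M : Finset A}
    (h1 : 1 ≤ n) (h2 : n ≤ w.length)
    (hpres : RelPresented X Φ Ψ w n ↑M)
    (hocc : OccursInPoint y w) :
    relPtDeg X Y (sliding Φ) (sliding Ψ) y ≤ (M.card : ℕ∞) := by
  by_contra hcon
  rw [not_le] at hcon
  have hle : ((M.card + 1 : ℕ) : ℕ∞) ≤ relPtDeg X Y (sliding Φ) (sliding Ψ) y := by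
    push_cast
    exact (ENat.add_one_le_iff (ENat.coe_ne_top M.card)).2 hcon
  obtain ⟨T, hTsub, hTcard⟩ := Set.exists_subset_encard_eq hle
  have hTfin : T.Finite := Set.finite_of_encard_eq_coe hTcard
  have hTFcard : hTfin.toFinset.card = M.card + 1 := by
    have := hTfin.encard_eq_coe_toFinset_card
    rw [hTcard] at this
    exact_mod_cast this.symm
  -- representatives
  have hmemT : ∀ S : {S // S ∈ hTfin.toFinset}, ∃ x, x ∈ X ∧ sliding Φ x = y ∧
      (S : Set (ℤ → A)) = relClass X Y (sliding Φ) (sliding Ψ) x := by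
    rintro ⟨S, hS⟩
    have : S ∈ T := hTfin.mem_toFinset.1 hS
    obtain ⟨x, hx, hfx, hSx⟩ := hTsub this
    exact ⟨x, hx, hfx, hSx⟩
  choose xs hxsX hxsφ hxscl using hmemT
  -- a default element of M
  obtain ⟨m₀, hm₀⟩ := id hocc
  obtain ⟨x₀, hx₀X, hx₀φ⟩ : ∃ x₀, x₀ ∈ X ∧ sliding Φ x₀ = y := by
    have := hφ ▸ hy
    obtain ⟨x₀, hx₀, hfx₀⟩ := this
    exact ⟨x₀, hx₀, hfx₀⟩
  have hseg : ∀ (x : ℤ → A), x ∈ X → sliding Φ x = y → ∀ m : ℤ, OccursAt y w m →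
      (segment x m w.length).map Φ = w := by
    intro x hx hfx m hm
    rw [segment_map, hfx, ← eq_segment_of_occursAt hm]
  obtain ⟨a₀, ha₀, -⟩ := hpres (segment x₀ m₀ w.length)
    (blockOccursIn_segment hx₀X m₀ w.length) (hseg x₀ hx₀X hx₀φ m₀ hm₀)
  -- routing choice
  have hRoute : ∀ m : ℤ, OccursAt y w m → ∀ S : {S // S ∈ hTfin.toFinset},
      ∃ q : {a // a ∈ M}, RelRoutable X Φ Ψ w n q.1 (segment (xs S) m w.length) := by
    intro m hm S
    obtain ⟨a, ha, hra⟩ := hpres (segment (xs S) m w.length)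
      (blockOccursIn_segment (hxsX S) m w.length) (hseg (xs S) (hxsX S) (hxsφ S) m hm)
    exact ⟨⟨a, ha⟩, hra⟩
  classical
  set F : ℤ → ({S // S ∈ hTfin.toFinset} → {a // a ∈ M}) := fun m =>
    if h : OccursAt y w m then fun S => Classical.choose (hRoute m h S)
    else fun _ => ⟨a₀, ha₀⟩ with hF
  have hFspec : ∀ m (h : OccursAt y w m) S,
      RelRoutable X Φ Ψ w n ((F m) S).1 (segment (xs S) m w.length) := by
    intro m h S
    rw [hF]
    simp only [dif_pos h]
    exact Classical.choose_spec (hRoute m h S)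
  -- pigeonhole: one routing pattern occurs cofinally
  obtain ⟨v, hv⟩ := cofinal_pigeon (S := {m : ℤ | OccursAt y w m})
    (fun k => hrec w hocc k) F
  -- collision within the pattern
  obtain ⟨S, S', hSS', hvSS'⟩ := Fintype.exists_ne_map_eq_of_card_lt v (by
    rw [Fintype.card_coe, Fintype.card_coe, hTFcard]
    omega)
  -- the two representatives are relatively transition equivalent
  have hwy : ∀ m : ℤ, OccursAt y w m → ∀ i : ℕ, i < w.length →
      w[i]? = some (y (m + i)) := fun m hm i hi => hm i hi
  have hbridge : ∀ (S₁ S₂ : {S // S ∈ hTfin.toFinset}), v S₁ = v S₂ →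
      RelTransTo X Y (sliding Φ) (sliding Ψ) (xs S₁) (xs S₂) := by
    intro S₁ S₂ hvv
    constructor
    · rw [hxsφ S₁, hxsφ S₂]
      exact transEquiv_refl hy
    · intro m
      obtain ⟨p, hp, hpS, hFp⟩ := hv (m + 1)
      have hr₁ := hFspec p hpS S₁
      have hr₂ := hFspec p hpS S₂
      rw [hFp] at hr₁ hr₂
      rw [hvv] at hr₁
      exact bridge_of_common_route hX hXsft hφ (hxsX S₁) (hxsX S₂) (hxsφ S₁)
        (hxsφ S₂) h1 h2 hr₁ hr₂ (hwy p hpS) m (by omega)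
  have hequiv : RelTransEquiv X Y (sliding Φ) (sliding Ψ) (xs S) (xs S') :=
    ⟨hbridge S S' hvSS', hbridge S' S hvSS'.symm⟩
  have hclassne : relClass X Y (sliding Φ) (sliding Ψ) (xs S) ≠
      relClass X Y (sliding Φ) (sliding Ψ) (xs S') := by
    rw [← hxscl S, ← hxscl S']
    intro h
    exact hSS' (Subtype.ext h)
  exact hclassne (relClass_eq_of_equiv hXsft hYsft hφ hequiv)

end DirOne
/- ================= Step A: uniform routing over the fiber ================= -/

section StepA

set_option linter.unusedSectionVars false

open Filter

variable {A B C : Type*} [Fintype A] [TopologicalSpace A] [DiscreteTopology A]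
  [TopologicalSpace B] [DiscreteTopology B]
variable {X : Set (ℤ → A)} {Y : Set (ℤ → B)} {Φ : A → B} {Ψ : B → C}

lemma stepA (hX : IsShiftSpace X) (hXsft : IsOneStepSFT X) (hYsft : IsOneStepSFT Y)
    (hφ : sliding Φ '' X = Y) {y : ℤ → B} (hy : y ∈ Y)
    (hfin : relPtDeg X Y (sliding Φ) (sliding Ψ) y ≠ ⊤) :
    ∃ (p t : ℤ) (M : Finset A), 0 < p ∧ p < t ∧
      (M.card : ℕ∞) ≤ relPtDeg X Y (sliding Φ) (sliding Ψ) y ∧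
      ∀ x, x ∈ X → sliding Φ x = y →
        ∃ E, E ∈ X ∧ E 0 = x 0 ∧ E t = x t ∧ E p ∈ M ∧
          (∀ q, Ψ (Φ (E q)) = Ψ (y q)) := by
  classical
  obtain ⟨xinh, -⟩ := hX.1
  haveI : Nonempty (ℤ → A) := ⟨xinh⟩
  set 𝒮 : Set (Set (ℤ → A)) := {S | ∃ x ∈ X, sliding Φ x = y ∧
    S = relClass X Y (sliding Φ) (sliding Ψ) x} with h𝒮
  have hSfin : 𝒮.Finite := Set.encard_ne_top_iff.1 hfin
  set 𝒮F : Finset (Set (ℤ → A)) := hSfin.toFinset with h𝒮F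
  have hdeg : relPtDeg X Y (sliding Φ) (sliding Ψ) y = (𝒮F.card : ℕ∞) :=
    hSfin.encard_eq_coe_toFinset_card
  -- representatives
  have hrepex : ∀ S : Set (ℤ → A), S ∈ 𝒮F → ∃ x, x ∈ X ∧ sliding Φ x = y ∧
      S = relClass X Y (sliding Φ) (sliding Ψ) x := by
    intro S hS
    obtain ⟨x, hx, hfx, hSx⟩ := hSfin.mem_toFinset.1 hS
    exact ⟨x, hx, hfx, hSx⟩
  choose! rep hrepX hrepφ hrepcl using hrepex
  have key : ∀ x, x ∈ X → sliding Φ x = y →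
      relClass X Y (sliding Φ) (sliding Ψ) x ∈ 𝒮F ∧
      RelTransEquiv X Y (sliding Φ) (sliding Ψ)
        (rep (relClass X Y (sliding Φ) (sliding Ψ) x)) x := by
    intro x hx hfx
    have hmem : relClass X Y (sliding Φ) (sliding Ψ) x ∈ 𝒮F :=
      hSfin.mem_toFinset.2 ⟨x, hx, hfx, rfl⟩
    refine ⟨hmem, ?_⟩
    have hcl := hrepcl _ hmem
    have hself : x ∈ relClass X Y (sliding Φ) (sliding Ψ) x := mem_relClass_self hφ hx
    rw [hcl] at hself
    exact hself.2
  -- A-side: left routes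
  set QA : A → Set (ℤ → A) → Prop := fun a S => ∃ x, x ∈ X ∧ sliding Φ x = y ∧
    x 0 = a ∧ relClass X Y (sliding Φ) (sliding Ψ) x = S with hQAdef
  have hLAex : ∀ (a : A) (S : Set (ℤ → A)), QA a S → ∃ (L : ℤ → A) (nb : ℤ),
      L ∈ X ∧ 0 < nb ∧ L 0 = a ∧ (∀ j, nb ≤ j → L j = rep S j) ∧
      (∀ q, Ψ (Φ (L q)) = Ψ (y q)) := by
    rintro a S ⟨x, hx, hfx, hx0, hcl⟩
    have hk := (key x hx hfx).2
    rw [hcl] at hk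
    obtain ⟨b, hbX, hbl, ⟨nb, hnb, hbr⟩, hbrel⟩ := hk.2.2 0
    refine ⟨b, nb, hbX, hnb, by rw [hbl 0 le_rfl, hx0], hbr, ?_⟩
    intro q
    have e1 : Ψ (Φ (b q)) = Ψ (Φ (x q)) := congrFun hbrel.1.1 q
    have e2 : Φ (x q) = y q := congrFun hfx q
    rw [e1, e2]
  choose! LA nbA hLAX hLApos hLA0 hLAtail hLAψ using hLAex
  set pN : ℕ := (Finset.univ ×ˢ 𝒮F).sup fun q => (nbA q.1 q.2).toNat with hpN
  set pstar : ℤ := 1 + pN with hpstar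
  have hpstar_pos : 0 < pstar := by rw [hpstar]; positivity
  have hple : ∀ (a : A) (S : Set (ℤ → A)), S ∈ 𝒮F → nbA a S ≤ pstar := by
    intro a S hS
    have hmem : (a, S) ∈ Finset.univ ×ˢ 𝒮F := Finset.mem_product.2 ⟨Finset.mem_univ a, hS⟩
    have h1 : (nbA a S).toNat ≤ pN := Finset.le_sup (f := fun q => (nbA q.1 q.2).toNat) hmem
    rw [hpstar]
    omega
  -- B-side: right routes, via compactness
  have hBt : ∃ t : ℤ, pstar < t ∧ ∀ x, x ∈ X → sliding Φ x = y →
      ∃ S ∈ 𝒮F, QA (x 0) S ∧ ∃ R, R ∈ X ∧ (∀ j, j ≤ pstar → R j = rep S j) ∧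
        R t = x t ∧ (∀ q, Ψ (Φ (R q)) = Ψ (y q)) := by
    by_contra hB
    have hseq : ∀ k : ℕ, ∃ x, x ∈ X ∧ sliding Φ x = y ∧
        ∀ S ∈ 𝒮F, ¬(QA (x 0) S ∧ ∃ R, R ∈ X ∧ (∀ j, j ≤ pstar → R j = rep S j) ∧
          R (pstar + 1 + k) = x (pstar + 1 + k) ∧ (∀ q, Ψ (Φ (R q)) = Ψ (y q))) := by
      intro k
      by_contra hk
      push_neg at hk
      refine hB ⟨pstar + 1 + k, by omega, ?_⟩
      intro x hx hfx
      obtain ⟨S, hS, hP⟩ := hk x hx hfx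
      exact ⟨S, hS, hP⟩
    choose u huX huφ hubad using hseq
    obtain ⟨z, hz⟩ := exists_cluster u
    have hzX : z ∈ X := cluster_mem_closed hz hX.2.1 0 (fun k _ => huX k)
    have hzφ : sliding Φ z = y := by
      funext j
      have hSj : IsClosed {x : ℤ → A | Φ (x j) = y j} := by
        have hcont : Continuous (fun x : ℤ → A => Φ (x j)) :=
          (continuous_of_discreteTopology (α := A)).comp (continuous_apply j)
        exact (isClosed_discrete ({y j} : Set B)).preimage hcont
      exact cluster_mem_closed hz hSj 0 (fun k _ => congrFun (huφ k) j)
    obtain ⟨hzS, hzeq⟩ := key z hzX hzφ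
    set Sb := relClass X Y (sliding Φ) (sliding Ψ) z with hSb
    obtain ⟨D, hDX, hDl, ⟨N, hNgt, hDr⟩, hDrel⟩ := hzeq.1.2 pstar
    have hDψ : ∀ q, Ψ (Φ (D q)) = Ψ (y q) := by
      intro q
      have e1 : Ψ (Φ (D q)) = Ψ (Φ (rep Sb q)) := congrFun hDrel.1.1 q
      have e2 : Φ (rep Sb q) = y q := congrFun (hrepφ Sb hzS) q
      rw [e1, e2]
    obtain ⟨k, hkge, hkag⟩ := cluster_agree hz {0, N} (N - pstar - 1).toNat
    have hag0 : u k 0 = z 0 := hkag 0 (by simp)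
    have hagN : u k N = z N := hkag N (by simp)
    have htk : N ≤ pstar + 1 + k := by omega
    refine hubad k Sb hzS ⟨⟨z, hzX, hzφ, hag0.symm, rfl⟩, ?_⟩
    refine ⟨spl N D (u k), glue hXsft hDX (huX k) (by rw [hDr N le_rfl, hagN]), ?_, ?_, ?_⟩
    · intro j hj
      rw [spl_lt (by omega), hDl j hj]
    · rw [spl_ge htk]
    · intro q
      by_cases hq : q < N
      · rw [spl_lt hq]; exact hDψ q
      · rw [spl_ge (not_lt.1 hq)]
        have := congrFun (huφ k) q
        show Ψ (Φ (u k q)) = Ψ (y q)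
        rw [show Φ (u k q) = y q from this]
  obtain ⟨t, htp, hBB⟩ := hBt
  refine ⟨pstar, t, 𝒮F.image (fun S => rep S pstar), hpstar_pos, htp, ?_, ?_⟩
  · rw [hdeg]
    exact_mod_cast Finset.card_image_le
  · intro x hx hfx
    obtain ⟨S, hSF, hqa, R, hRX, hRl, hRt, hRψ⟩ := hBB x hx hfx
    have hL0 := hLA0 (x 0) S hqa
    have hLtail := hLAtail (x 0) S hqa
    have hLψ := hLAψ (x 0) S hqa
    have hLX := hLAX (x 0) S hqa
    have hj : LA (x 0) S pstar = R pstar := by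
      rw [hLtail pstar (hple (x 0) S hSF), hRl pstar le_rfl]
    refine ⟨spl pstar (LA (x 0) S) R, glue hXsft hLX hRX hj, ?_, ?_, ?_, ?_⟩
    · rw [spl_lt hpstar_pos]; exact hL0
    · rw [spl_ge (by omega)]; exact hRt
    · rw [spl_ge le_rfl, hRl pstar le_rfl]
      exact Finset.mem_image.2 ⟨S, hSF, rfl⟩
    · intro q
      by_cases hq : q < pstar
      · rw [spl_lt hq]; exact hLψ q
      · rw [spl_ge (not_lt.1 hq)]; exact hRψ q

end StepA
/- ================= Direction (ii): a word of small depth ================= -/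

section DirTwo

set_option linter.unusedSectionVars false

open Filter

variable {A B C : Type*} [Fintype A] [TopologicalSpace A] [DiscreteTopology A]
  [TopologicalSpace B] [DiscreteTopology B]
variable {X : Set (ℤ → A)} {Y : Set (ℤ → B)} {Φ : A → B} {Ψ : B → C}

lemma exists_presented (hX : IsShiftSpace X) (hXsft : IsOneStepSFT X)
    (hYsft : IsOneStepSFT Y) (hφ : sliding Φ '' X = Y) {y : ℤ → B} (hy : y ∈ Y)
    (hfin : relPtDeg X Y (sliding Φ) (sliding Ψ) y ≠ ⊤) :
    ∃ w : List B, OccursInPoint y w ∧ ∃ (n : ℕ) (M : Finset A), 1 ≤ n ∧ n ≤ w.length ∧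
      RelPresented X Φ Ψ w n ↑M ∧
      (M.card : ℕ∞) ≤ relPtDeg X Y (sliding Φ) (sliding Ψ) y := by
  obtain ⟨p, t, M, hp, hpt, hMle, hroute⟩ := stepA hX hXsft hYsft hφ hy hfin
  obtain ⟨tN, htcast⟩ : ∃ nn : ℕ, (nn : ℤ) = t := ⟨t.toNat, by omega⟩
  obtain ⟨pN, hpcast⟩ : ∃ nn : ℕ, (nn : ℤ) = p := ⟨p.toNat, by omega⟩
  set c : ℕ → ℤ := fun k => -(k : ℤ) - 1 with hc
  set len : ℕ → ℕ := fun k => 2 * k + tN + 3 with hlen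
  set wk : ℕ → List B := fun k => segment y (c k) (len k) with hwk
  set npos : ℕ → ℕ := fun k => k + pN + 2 with hnpos
  have hck : ∀ k : ℕ, c k = -(k : ℤ) - 1 := fun _ => rfl
  have hlk : ∀ k : ℕ, len k = 2 * k + tN + 3 := fun _ => rfl
  have hnk : ∀ k : ℕ, npos k = k + pN + 2 := fun _ => rfl
  have hwlen : ∀ k, (wk k).length = len k := fun k => segment_length _ _ _
  have hwocc : ∀ k, OccursInPoint y (wk k) := fun k => ⟨c k, occursAt_segment _ _ _⟩
  have hn1 : ∀ k, 1 ≤ npos k := fun k => by rw [hnk]; omega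
  have hn2 : ∀ k, npos k ≤ (wk k).length := by
    intro k
    rw [hwlen, hnk, hlk]
    omega
  have hclaim : ∃ k : ℕ, RelPresented X Φ Ψ (wk k) (npos k) ↑M := by
    by_contra hnp
    push_neg at hnp
    have hbad : ∀ k, ∃ u, BlockOccursIn X u ∧ u.map Φ = wk k ∧
        ∀ a ∈ (M : Set A), ¬RelRoutable X Φ Ψ (wk k) (npos k) a u := by
      intro k
      have := hnp k
      unfold RelPresented at this
      push_neg at this
      exact this
    choose u hu1 hu2 hu3 using hbad
    have hulen : ∀ k, (u k).length = len k := by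
      intro k
      have := congrArg List.length (hu2 k)
      rwa [List.length_map, hwlen] at this
    have hzk : ∀ k, ∃ z, z ∈ X ∧ OccursAt z (u k) (c k) :=
      fun k => blockOccursIn_elim hX (hu1 k) (c k)
    choose z hzX hzocc using hzk
    -- φ-agreement of z k with y on the window
    have hzφ : ∀ (k : ℕ) (j : ℤ), c k ≤ j → j ≤ (k : ℤ) + tN + 1 → Φ (z k j) = y j := by
      intro k j hj1 hj2
      have hckk := hck k
      have hlkk := hlk k
      obtain ⟨i, hiq, hil⟩ : ∃ i : ℕ, (i : ℤ) = j - c k ∧ i < len k :=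
        ⟨(j - c k).toNat, by omega, by omega⟩
      have h1 : (u k)[i]? = some (z k (c k + i)) := hzocc k i (by rw [hulen]; exact hil)
      have h2 : ((u k).map Φ)[i]? = (wk k)[i]? := by rw [hu2 k]
      rw [List.getElem?_map, h1] at h2
      rw [show wk k = segment y (c k) (len k) from rfl, segment_get? y (c k) hil] at h2
      have h3 : Φ (z k (c k + i)) = y (c k + i) := Option.some_injective _ h2
      rwa [show c k + (i : ℤ) = j by omega] at h3
    -- cluster point of the witnesses
    obtain ⟨zb, hzb⟩ := exists_cluster z
    have hzbX : zb ∈ X := cluster_mem_closed hzb hX.2.1 0 (fun k _ => hzX k)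
    have hzbφ : sliding Φ zb = y := by
      funext j
      have hSj : IsClosed {x : ℤ → A | Φ (x j) = y j} := by
        have hcont : Continuous (fun x : ℤ → A => Φ (x j)) :=
          (continuous_of_discreteTopology (α := A)).comp (continuous_apply j)
        exact (isClosed_discrete ({y j} : Set B)).preimage hcont
      refine cluster_mem_closed hzb hSj j.natAbs (fun k hk => ?_)
      have hckk := hck k
      exact hzφ k j (by omega) (by omega)
    obtain ⟨E, hEX, hE0, hEt, hEp, hEψ⟩ := hroute zb hzbX hzbφ
    obtain ⟨k, -, hkag⟩ := cluster_agree hzb (Finset.Icc 0 t) 0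
    have hag : ∀ j : ℤ, 0 ≤ j → j ≤ t → z k j = zb j :=
      fun j h1 h2 => hkag j (Finset.mem_Icc.2 ⟨h1, h2⟩)
    have hckk := hck k
    have hlkk := hlk k
    have hnkk := hnk k
    -- build the routing point
    set Q : ℤ → A := spl (t + 1) E (z k) with hQ
    have hQX : Q ∈ X := by
      refine glue' hXsft hEX (hzX k) ?_
      have h5 : t + 1 - 1 = t := by omega
      rw [h5, hEt, hag t (by omega) le_rfl]
    set P : ℤ → A := spl 0 (z k) Q with hP
    have hPX : P ∈ X := by
      refine glue hXsft (hzX k) hQX ?_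
      rw [hQ, spl_lt (by omega), hE0, hag 0 le_rfl (by omega)]
    have hPneg : ∀ j : ℤ, j < 0 → P j = z k j := fun j hj => spl_lt hj _ _
    have hPmid : ∀ j : ℤ, 0 ≤ j → j ≤ t → P j = E j := by
      intro j h1 h2
      rw [hP, spl_ge h1, hQ, spl_lt (by omega)]
    have hPpos : ∀ j : ℤ, t < j → P j = z k j := by
      intro j hj
      rw [hP, spl_ge (by omega), hQ, spl_ge (by omega)]
    -- the routing block
    have huget : ∀ i : ℕ, i < len k → (u k)[i]? = some (z k (c k + ↑i)) :=
      fun i hi => hzocc k i (by rw [hulen]; exact hi)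
    have hroutable : RelRoutable X Φ Ψ (wk k) (npos k) (E p) (u k) := by
      refine ⟨segment P (c k) (len k), blockOccursIn_segment hPX _ _, ?_, ?_, ?_, ?_, ?_⟩
      · rw [segment_length, hulen]
      · -- ψ∘φ image matches ψ(w)
        apply List.ext_getElem?
        intro i
        by_cases hi : i < len k
        · rw [List.getElem?_map, segment_get? P (c k) hi,
            show wk k = segment y (c k) (len k) from rfl, List.getElem?_map,
            segment_get? y (c k) hi]
          have hval : Ψ (Φ (P (c k + ↑i))) = Ψ (y (c k + ↑i)) := by
            set j : ℤ := c k + i with hj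
            rcases lt_or_ge j 0 with hjc | hjc
            · rw [hPneg j hjc, hzφ k j (by omega) (by omega)]
            · rcases le_or_gt j t with hjc2 | hjc2
              · rw [hPmid j hjc hjc2]
                exact hEψ j
              · rw [hPpos j hjc2, hzφ k j (by omega) (by omega)]
          simp only [Option.map_some]
          exact congrArg some hval
        · have hL : ((segment P (c k) (len k)).map (Ψ ∘ Φ))[i]? = none :=
            List.getElem?_eq_none_iff.2 (by rw [List.length_map, segment_length]; omega)
          have hR : ((wk k).map Ψ)[i]? = none :=
            List.getElem?_eq_none_iff.2 (by rw [List.length_map, hwlen]; omega)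
          rw [hL, hR]
      · rw [segment_get? P (c k) (show 0 < len k by omega),
          huget 0 (by omega)]
        have h0 : c k + ((0 : ℕ) : ℤ) = c k := by norm_num
        rw [h0, hPneg (c k) (by omega)]
      · rw [segment_length, hulen]
        have hlt : len k - 1 < len k := by omega
        rw [segment_get? P (c k) hlt, huget (len k - 1) hlt]
        have hidx2 : c k + ((len k - 1 : ℕ) : ℤ) = (k : ℤ) + tN + 1 := by omega
        rw [hidx2, hPpos ((k : ℤ) + tN + 1) (by omega)]
      · have hlt : npos k - 1 < len k := by omega
        rw [segment_get? P (c k) hlt]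
        have hidx : c k + ((npos k - 1 : ℕ) : ℤ) = p := by omega
        rw [hidx, hPmid p (by omega) (by omega)]
    exact hu3 k (E p) hEp hroutable
  obtain ⟨k, hk⟩ := hclaim
  exact ⟨wk k, hwocc k, npos k, M, hn1 k, hn2 k, hk, hMle⟩

end DirTwo
theorem relPtDeg_eq_min_relDepth_of_recurrent
    {A B C : Type*} [Fintype A] [Fintype B] [Fintype C]
    [TopologicalSpace A] [DiscreteTopology A]
    [TopologicalSpace B] [DiscreteTopology B]
    [TopologicalSpace C] [DiscreteTopology C]
    (X : Set (ℤ → A)) (Y : Set (ℤ → B)) (Z : Set (ℤ → C))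
    (hX : IsShiftSpace X) (hXirr : IsIrreducibleShift X) (hXsft : IsOneStepSFT X)
    (hY : IsShiftSpace Y) (hYirr : IsIrreducibleShift Y) (hYsft : IsOneStepSFT Y)
    (hZ : IsShiftSpace Z)
    (Φ : A → B) (Ψ : B → C)
    (hφ : sliding Φ '' X = Y) (hψ : sliding Ψ '' Y = Z)
    (y : ℤ → B) (hy : y ∈ Y) (hrec : Recurrent y) :
    relPtDeg X Y (sliding Φ) (sliding Ψ) y =
      sInf {k : ℕ∞ | ∃ w : List B, OccursInPoint y w ∧ k = relDepth X Φ Ψ w} := by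
  apply le_antisymm
  · apply le_sInf
    rintro k ⟨w, hocc, rfl⟩
    apply le_sInf
    rintro j ⟨n, h1, h2, M, hpres, rfl⟩
    exact relPtDeg_le_of_presented hX hXsft hYsft hφ hy hrec h1 h2 hpres hocc
  · by_cases hfin : relPtDeg X Y (sliding Φ) (sliding Ψ) y = ⊤
    · rw [hfin]; exact le_top
    · obtain ⟨w, hocc, n, M, h1, h2, hpres, hcard⟩ :=
        exists_presented hX hXsft hYsft hφ hy hfin
      have h3 : relDepth X Φ Ψ w ≤ (M.card : ℕ∞) := sInf_le ⟨n, h1, h2, M, hpres, rfl⟩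
      calc sInf {k : ℕ∞ | ∃ w : List B, OccursInPoint y w ∧ k = relDepth X Φ Ψ w}
          ≤ relDepth X Φ Ψ w := sInf_le ⟨w, hocc, rfl⟩
        _ ≤ relPtDeg X Y (sliding Φ) (sliding Ψ) y := le_trans h3 hcard

end SymbDyn
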